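/- The integral of (1 - x^(2/n))^(n/2) over the interval [0, 1] equals n²·Γ(n/2)² / (4·n!). -/

import Mathlib

open MeasureTheory intervalIntegral Set in
theorem stmt_1 (n : ℕ) (hn : 1 ≤ n) :
    ∫ x in (0:ℝ)..1, (1 - x ^ ((2:ℝ)/n)) ^ ((n:ℝ)/2)
      = (n : ℝ)^2 * Real.Gamma ((n : ℝ)/2) ^ 2 / (4 * (Nat.factorial n : ℝ)) := by
  have hn0 : (0:ℝ) < n := by exact_mod_cast hn
  set p : ℝ := (n:ℝ)/2 with hp_def
  have hp : 0 < p := by positivity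
  set f : ℝ → ℝ := fun y => y ^ p with hf_def
  set f' : ℝ → ℝ := fun y => p * y ^ (p - 1) with hf'_def
  set g : ℝ → ℝ := fun u => (1 - u ^ ((2:ℝ)/n)) ^ p with hg_def
  have hgc : Continuous g := by
    apply Continuous.rpow_const
    · exact continuous_const.sub (continuous_id.rpow_const fun x => Or.inr (by positivity))
    · exact fun x => Or.inr hp.le
  have hfc : ContinuousOn f (Set.uIcc (0:ℝ) 1) :=
    continuousOn_id.rpow_const fun x _ => Or.inr hp.le
  -- the function obtained after change of variables
  have heq : ∀ y ∈ Icc (0:ℝ) 1, (g ∘ f) y * f' y = (1 - y) ^ p * (p * y ^ (p - 1)) := by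
    intro y hy
    have h1 : (y ^ p) ^ ((2:ℝ)/n) = y := by
      rw [← Real.rpow_mul hy.1]
      rw [show p * ((2:ℝ)/n) = 1 by field_simp [hp_def]; linarith [hp_def], Real.rpow_one]
    simp only [Function.comp, hg_def, hf_def, hf'_def, h1]
  have hint : IntegrableOn (fun y => (1 - y) ^ p * (p * y ^ (p - 1))) (Icc (0:ℝ) 1) := by
    have h1 : IntegrableOn (fun y : ℝ => p * y ^ (p - 1)) (Icc (0:ℝ) 1) := by
      have := (intervalIntegral.intervalIntegrable_rpow' (a := 0) (b := 1)
        (r := p - 1) (by linarith)).const_mul p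
      rwa [intervalIntegrable_iff_integrableOn_Icc_of_le zero_le_one] at this
    exact IntegrableOn.continuousOn_mul
      ((continuousOn_const.sub continuousOn_id).rpow_const fun x _ => Or.inr hp.le)
      h1 isCompact_Icc
  -- change of variables x = y ^ p
  have hsub : ∫ x in (0:ℝ)..1, (1 - x ^ ((2:ℝ)/n)) ^ ((n:ℝ)/2)
      = ∫ y in (0:ℝ)..1, (1 - y) ^ p * (p * y ^ (p - 1)) := by
    have key : (∫ y in (0:ℝ)..1, (g ∘ f) y * f' y) = ∫ u in (f 0)..(f 1), g u := by
      apply intervalIntegral.integral_comp_mul_deriv''' hfc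
      · intro x hx
        rw [min_def, max_def] at hx
        simp only [if_pos zero_le_one] at hx
        exact (Real.hasDerivAt_rpow_const (Or.inl hx.1.ne')).hasDerivWithinAt
      · exact hgc.continuousOn
      · exact hgc.continuousOn.integrableOn_compact ((isCompact_uIcc).image_of_continuousOn hfc)
      · rw [uIcc_of_le zero_le_one]
        exact hint.congr_fun (fun y hy => (heq y hy).symm) measurableSet_Icc
    have hf0 : f 0 = 0 := by simp [hf_def, Real.zero_rpow hp.ne']
    have hf1 : f 1 = 1 := by simp [hf_def]
    rw [hf0, hf1] at key
    rw [← key]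
    exact intervalIntegral.integral_congr fun y hy => by
      rw [uIcc_of_le zero_le_one] at hy; exact heq y hy
  -- pull out the constant and identify with the Beta integral
  have hpull : ∫ y in (0:ℝ)..1, (1 - y) ^ p * (p * y ^ (p - 1))
      = p * ∫ y in (0:ℝ)..1, y ^ (p - 1) * (1 - y) ^ p := by
    rw [← intervalIntegral.integral_const_mul]
    exact intervalIntegral.integral_congr fun y hy => by ring
  -- the Beta integral value
  have hbeta : ∫ y in (0:ℝ)..1, y ^ (p - 1) * (1 - y) ^ p
      = Real.Gamma p * Real.Gamma (p + 1) / Real.Gamma (2 * p + 1) := by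
    have hu : 0 < (Complex.ofReal p).re := by simpa using hp
    have hv : 0 < (Complex.ofReal (p + 1)).re := by simpa using by linarith
    have h1 := Complex.Gamma_mul_Gamma_eq_betaIntegral hu hv
    have h2 : Complex.betaIntegral (Complex.ofReal p) (Complex.ofReal (p + 1))
        = ((∫ y in (0:ℝ)..1, y ^ (p - 1) * (1 - y) ^ p : ℝ) : ℂ) := by
      rw [Complex.betaIntegral, ← intervalIntegral.integral_ofReal]
      refine intervalIntegral.integral_congr fun x hx => ?_
      rw [uIcc_of_le zero_le_one] at hx
      rw [Complex.ofReal_mul, Complex.ofReal_cpow hx.1,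
        Complex.ofReal_cpow (by linarith [hx.2] : (0:ℝ) ≤ 1 - x)]
      push_cast
      ring_nf
    rw [h2] at h1
    have h3 : (Complex.ofReal p) + (Complex.ofReal (p + 1)) = ((2 * p + 1 : ℝ) : ℂ) := by
      push_cast; ring
    rw [h3, Complex.Gamma_ofReal, Complex.Gamma_ofReal, Complex.Gamma_ofReal,
      ← Complex.ofReal_mul, ← Complex.ofReal_mul] at h1
    have h4 := Complex.ofReal_injective h1
    have h5 : Real.Gamma (2 * p + 1) ≠ 0 := (Real.Gamma_pos_of_pos (by linarith)).ne'
    field_simp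
    rw [mul_comm p 2]
    linarith [h4]
  -- put everything together
  rw [hsub, hpull, hbeta, Real.Gamma_add_one hp.ne']
  have h2p : 2 * p + 1 = (n:ℝ) + 1 := by field_simp [hp_def]; linarith [hp_def]
  rw [h2p]
  have hfact : Real.Gamma ((n:ℝ) + 1) = (Nat.factorial n : ℝ) := by
    exact_mod_cast Real.Gamma_nat_eq_factorial n
  rw [hfact]
  have hfne : (Nat.factorial n : ℝ) ≠ 0 := by positivity
  field_simp [hp_def]
  ring
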